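/- For N ≥ 2, the spectrum of A_N^quant (as a matrix over ℂ) is exactly { 2i·sin(π/N)·(k - (N+1)/2) : k = 1, ..., N }. -/

import Mathlib

open Complex Finset Matrix

lemma sum_inv_pow_sub_one (N : ℕ) (hN : 1 ≤ N) (η : ℂ) (hη : η ^ N = 1)
    (hne : ∀ d ∈ Finset.Ico 1 N, η ^ d ≠ 1) :
    ∑ d ∈ Finset.Ico 1 N, (η ^ d - 1)⁻¹ = (1 - N) / 2 := by
  have hrefl : ∑ d ∈ Finset.Ico 1 N, (η ^ d - 1)⁻¹
      = ∑ d ∈ Finset.Ico 1 N, (η ^ (N - d) - 1)⁻¹ := by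
    refine Finset.sum_nbij' (fun d => N - d) (fun d => N - d) ?_ ?_ ?_ ?_ ?_ <;>
      intro a ha <;> simp only [Finset.mem_Ico] at ha ⊢
    · omega
    · omega
    · omega
    · omega
    · rw [show N - (N - a) = a by omega]
  have key : ∀ d ∈ Finset.Ico 1 N, (η ^ d - 1)⁻¹ + (η ^ (N - d) - 1)⁻¹ = -1 := by
    intro d hd
    simp only [Finset.mem_Ico] at hd
    have hab : η ^ d * η ^ (N - d) = 1 := by
      rw [← pow_add]; rw [show d + (N - d) = N by omega]; exact hη
    have ha : η ^ d - 1 ≠ 0 := sub_ne_zero.mpr (hne d (by simp [Finset.mem_Ico]; omega))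
    have hb : η ^ (N - d) - 1 ≠ 0 := sub_ne_zero.mpr (hne (N - d) (by simp [Finset.mem_Ico]; omega))
    field_simp
    linear_combination hab
  have h2 : (2 : ℂ) * ∑ d ∈ Finset.Ico 1 N, (η ^ d - 1)⁻¹ = -((N : ℂ) - 1) := by
    calc (2:ℂ) * ∑ d ∈ Finset.Ico 1 N, (η ^ d - 1)⁻¹
        = ∑ d ∈ Finset.Ico 1 N, ((η ^ d - 1)⁻¹ + (η ^ (N-d) - 1)⁻¹) := by
          rw [Finset.sum_add_distrib, ← hrefl]; ring
      _ = ∑ d ∈ Finset.Ico 1 N, (-1 : ℂ) := Finset.sum_congr rfl key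
      _ = -((N : ℂ) - 1) := by
          simp only [Finset.sum_const, Nat.card_Ico, nsmul_eq_mul, mul_neg_one]
          push_cast [Nat.cast_sub hN]; ring
  field_simp at h2 ⊢
  linear_combination h2

lemma sum_Ico_pow_eq_neg_one (N j : ℕ) (hN : 1 ≤ N) (η : ℂ) (hη : η ^ N = 1)
    (hne : η ^ j ≠ 1) :
    ∑ d ∈ Finset.Ico 1 N, (η ^ j) ^ d = -1 := by
  have h0 : ∑ d ∈ Finset.range N, (η ^ j) ^ d = 0 := by
    rw [geom_sum_eq hne, ← pow_mul, mul_comm, pow_mul, hη, one_pow, sub_self, zero_div]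
  have h1 : ∑ d ∈ Finset.range N, (η ^ j) ^ d
      = (η ^ j) ^ 0 + ∑ d ∈ Finset.Ico 1 N, (η ^ j) ^ d := by
    rw [Finset.range_eq_Ico, ← Finset.sum_eq_sum_Ico_succ_bot (by omega : 0 < N)]
  rw [h1, pow_zero] at h0
  linear_combination h0

lemma sum_eta_identity (N k : ℕ) (hN : 1 ≤ N) (hk1 : 1 ≤ k) (hkN : k ≤ N) (η : ℂ)
    (hη : η ^ N = 1) (hne : ∀ d ∈ Finset.Ico 1 N, η ^ d ≠ 1) :
    ∑ d ∈ Finset.Ico 1 N, η ^ (k * d) / (η ^ d - 1) = ((N : ℂ) + 1 - 2 * k) / 2 := by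
  have hpt : ∀ d ∈ Finset.Ico 1 N,
      η ^ (k * d) / (η ^ d - 1) = (η ^ d - 1)⁻¹ + ∑ j ∈ Finset.range k, (η ^ d) ^ j := by
    intro d hd
    have hgeo : (∑ j ∈ Finset.range k, (η ^ d) ^ j) * (η ^ d - 1) = (η ^ d) ^ k - 1 :=
      geom_sum_mul _ _
    have hz : η ^ d - 1 ≠ 0 := sub_ne_zero.mpr (hne d hd)
    rw [← pow_mul, mul_comm d k] at hgeo
    field_simp
    linear_combination -hgeo
  rw [Finset.sum_congr rfl hpt, Finset.sum_add_distrib,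
    sum_inv_pow_sub_one N hN η hη hne, Finset.sum_comm]
  have hin : ∀ j ∈ Finset.range k,
      ∑ d ∈ Finset.Ico 1 N, (η ^ d) ^ j = (if j = 0 then (N : ℂ) else 0) - 1 := by
    intro j hj
    simp only [Finset.mem_range] at hj
    rcases Nat.eq_zero_or_pos j with h | h
    · subst h
      simp [Nat.cast_sub hN]
    · simp only [if_neg (by omega : ¬ j = 0)]
      have := sum_Ico_pow_eq_neg_one N j hN η hη (hne j (by simp [Finset.mem_Ico]; omega))
      simp only [← pow_mul, mul_comm j] at this ⊢
      rw [this]; ring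
  rw [Finset.sum_congr rfl hin, Finset.sum_sub_distrib, Finset.sum_ite_eq' (Finset.range k) 0,
    if_pos (by simp [Finset.mem_range]; omega), Finset.sum_const, Finset.card_range]
  push_cast
  ring

lemma term_id (a b : ℂ) (ha : a ≠ 0) (h1 : a ^ 2 - 1 ≠ 0) :
    b / ((a⁻¹ - a) * I / 2) = 2 * I * (b * a / (a ^ 2 - 1)) := by
  have hI : (I : ℂ) ≠ 0 := I_ne_zero
  have hd : (a⁻¹ - a) ≠ 0 := by
    intro h
    apply h1
    have := sub_eq_zero.mp h
    field_simp at this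
    linear_combination -this
  have hX : (a⁻¹ - a) * I / 2 ≠ 0 := div_ne_zero (mul_ne_zero hd hI) two_ne_zero
  rw [show 2 * I * (b * a / (a ^ 2 - 1)) = (2 * I * (b * a)) / (a ^ 2 - 1) by ring,
    div_eq_div_iff hX h1]
  have h2 : a⁻¹ * a = 1 := inv_mul_cancel₀ ha
  linear_combination (b*a^2 - b) * Complex.I_sq + (-(I^2) * b) * h2

lemma omega_sq_prim (N : ℕ) (hN : 2 ≤ N) :
    IsPrimitiveRoot (Complex.exp (Real.pi * I / N) ^ 2) N := by
  have h := Complex.isPrimitiveRoot_exp N (by omega)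
  have : Complex.exp (Real.pi * I / N) ^ 2 = Complex.exp (2 * Real.pi * I / N) := by
    rw [sq, ← Complex.exp_add]
    congr 1
    ring
  rw [this]
  exact h

lemma eig_sum (N k : ℕ) (hN : 2 ≤ N) (hk1 : 1 ≤ k) (hkN : k ≤ N) :
    ∑ d ∈ Finset.Ico 1 N,
      -((Real.sin (Real.pi / N) : ℝ) : ℂ) *
          Complex.exp (Real.pi * I / N) ^ ((2 * k - 1) * d) /
        ((Real.sin (Real.pi * d / N) : ℝ) : ℂ)
    = 2 * I * ((Real.sin (Real.pi / N) : ℝ) : ℂ) * ((k : ℂ) - ((N : ℂ) + 1) / 2) := by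
  set ω := Complex.exp (Real.pi * I / N) with hω
  set s : ℂ := ((Real.sin (Real.pi / N) : ℝ) : ℂ) with hs
  have hη : IsPrimitiveRoot (ω ^ 2) N := omega_sq_prim N hN
  have hne : ∀ d ∈ Finset.Ico 1 N, (ω ^ 2) ^ d ≠ 1 := by
    intro d hd
    simp only [Finset.mem_Ico] at hd
    exact hη.pow_ne_one_of_pos_of_lt (by omega) hd.2
  have hpt : ∀ d ∈ Finset.Ico 1 N,
      -s * ω ^ ((2 * k - 1) * d) / ((Real.sin (Real.pi * d / N) : ℝ) : ℂ)
      = (-s * (2 * I)) * ((ω ^ 2) ^ (k * d) / ((ω ^ 2) ^ d - 1)) := by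
    intro d hd
    simp only [Finset.mem_Ico] at hd
    have ha : ω ^ d ≠ 0 := pow_ne_zero _ (Complex.exp_ne_zero _)
    have h1 : (ω ^ d) ^ 2 - 1 ≠ 0 := by
      rw [← pow_mul, mul_comm d 2, pow_mul]
      exact sub_ne_zero.mpr (hne d (by simp [Finset.mem_Ico]; omega))
    have hexp : Complex.exp (((Real.pi * d / N : ℝ) : ℂ) * I) = ω ^ d := by
      rw [hω, ← Complex.exp_nat_mul]
      congr 1
      push_cast
      ring
    have hsin : ((Real.sin (Real.pi * d / N) : ℝ) : ℂ) = ((ω ^ d)⁻¹ - ω ^ d) * I / 2 := by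
      rw [Complex.ofReal_sin]
      simp only [Complex.sin]
      rw [neg_mul, Complex.exp_neg, hexp]
    have e1 : ω ^ ((2 * k - 1) * d) * ω ^ d = (ω ^ 2) ^ (k * d) := by
      rw [← pow_add, ← pow_mul]
      congr 1
      rw [← add_one_mul, show 2 * k - 1 + 1 = 2 * k by omega, mul_assoc]
    have e2 : (ω ^ d) ^ 2 = (ω ^ 2) ^ d := by
      rw [← pow_mul, ← pow_mul, mul_comm]
    rw [hsin, term_id (ω ^ d) _ ha h1, e2, ← e1]
    ring
  rw [Finset.sum_congr rfl hpt, ← Finset.mul_sum,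
    sum_eta_identity N k (by omega) hk1 hkN (ω ^ 2) hη.pow_eq_one hne]
  ring
lemma mulVec_eig (N k : ℕ) (hN : 2 ≤ N) (hk1 : 1 ≤ k) (hkN : k ≤ N)
    (A : Matrix (Fin N) (Fin N) ℂ)
    (hA : ∀ m n : Fin N, A m n = if m = n then 0
      else ((Real.sin (Real.pi / N) / Real.sin (Real.pi * ((m : ℝ) - (n : ℝ)) / N) : ℝ) : ℂ)) :
    A.mulVec (fun n : Fin N => Complex.exp (Real.pi * I / N) ^ ((2 * k - 1) * (n : ℕ)))
      = (2 * I * ((Real.sin (Real.pi / N) : ℝ) : ℂ) * ((k : ℂ) - ((N : ℂ) + 1) / 2)) •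
        (fun n : Fin N => Complex.exp (Real.pi * I / N) ^ ((2 * k - 1) * (n : ℕ))) := by
  haveI : NeZero N := ⟨by omega⟩
  have hN0 : (N : ℝ) ≠ 0 := by positivity
  have hNC : (N : ℂ) ≠ 0 := Nat.cast_ne_zero.mpr (by omega)
  set ω := Complex.exp (Real.pi * I / N) with hω
  set s : ℝ := Real.sin (Real.pi / N) with hs
  have hωN : ω ^ N = -1 := by
    rw [hω, ← Complex.exp_nat_mul,
      show (N : ℂ) * (Real.pi * I / N) = Real.pi * I by field_simp]
    exact Complex.exp_pi_mul_I
  set H : ℕ → ℂ := fun j => if j = 0 then 0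
    else -(s : ℂ) * ω ^ ((2 * k - 1) * j) / ((Real.sin (Real.pi * j / N) : ℝ) : ℂ) with hH
  funext m
  show ∑ n : Fin N, A m n * ω ^ ((2 * k - 1) * (n : ℕ)) = _
  have key : ∀ d : Fin N,
      A m (d + m) * ω ^ ((2 * k - 1) * ((d + m : Fin N) : ℕ))
        = H (d : ℕ) * ω ^ ((2 * k - 1) * (m : ℕ)) := by
    intro d
    by_cases hd : d = 0
    · subst hd
      rw [zero_add, hA m m, if_pos rfl]
      simp [hH]
    · have hdv : 1 ≤ (d : ℕ) ∧ (d : ℕ) < N := by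
        refine ⟨?_, d.isLt⟩
        by_contra h
        exact hd (Fin.ext (by simp only [Fin.val_zero]; omega))
      have hmn : m ≠ d + m := by
        intro h
        apply hd
        have h2 : d + m = 0 + m := by rw [zero_add, ← h]
        exact add_right_cancel h2
      rw [hA m (d + m), if_neg hmn, hH]
      simp only [if_neg (show ¬ (d : ℕ) = 0 by omega)]
      have hval : ((d + m : Fin N) : ℕ) = ((d : ℕ) + (m : ℕ)) % N := by
        simp [Fin.add_def]
      have hdpos : (0:ℝ) < (d : ℕ) := by exact_mod_cast hdv.1
      have hNpos : (0:ℝ) < N := by exact_mod_cast (by omega : 0 < N)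
      have hsinpos : (0:ℝ) < Real.sin (Real.pi * (d : ℕ) / N) := by
        apply Real.sin_pos_of_pos_of_lt_pi
        · have := Real.pi_pos
          positivity
        · rw [div_lt_iff₀ hNpos]
          have hdN : ((d : ℕ) : ℝ) < N := by exact_mod_cast hdv.2
          nlinarith [Real.pi_pos]
      have htC : ((Real.sin (Real.pi * (d : ℕ) / N) : ℝ) : ℂ) ≠ 0 :=
        Complex.ofReal_ne_zero.mpr (ne_of_gt hsinpos)
      by_cases hlt : (d : ℕ) + (m : ℕ) < N
      · have hnval : ((d + m : Fin N) : ℕ) = (d : ℕ) + (m : ℕ) := by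
          rw [hval, Nat.mod_eq_of_lt hlt]
        have harg : Real.pi * (((m : ℕ) : ℝ) - (((d + m : Fin N) : ℕ) : ℝ)) / N
            = -(Real.pi * (d : ℕ) / N) := by
          rw [hnval]
          push_cast
          ring
        rw [harg, Real.sin_neg, hnval, mul_add, pow_add]
        push_cast
        field_simp
      · have hge : N ≤ (d : ℕ) + (m : ℕ) := by omega
        have hnval : ((d + m : Fin N) : ℕ) = (d : ℕ) + (m : ℕ) - N := by
          rw [hval, Nat.mod_eq_sub_mod hge, Nat.mod_eq_of_lt (by omega)]
        have hcast : (((d + m : Fin N) : ℕ) : ℝ) = (d : ℕ) + (m : ℕ) - (N : ℝ) := by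
          rw [hnval, Nat.cast_sub hge]
          push_cast
          ring
        have harg : Real.pi * (((m : ℕ) : ℝ) - (((d + m : Fin N) : ℕ) : ℝ)) / N
            = Real.pi - Real.pi * (d : ℕ) / N := by
          rw [hcast]
          field_simp
          ring
        have hodd : ((-1 : ℂ)) ^ (2 * k - 1) = -1 :=
          Odd.neg_one_pow ⟨k - 1, by omega⟩
        have hcomb : ω ^ ((2 * k - 1) * ((d + m : Fin N) : ℕ)) * (ω ^ N) ^ (2 * k - 1)
            = ω ^ ((2 * k - 1) * (d : ℕ)) * ω ^ ((2 * k - 1) * (m : ℕ)) := by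
          rw [← pow_mul, ← pow_add, ← pow_add]
          congr 1
          rw [hnval,
            show (2 * k - 1) * ((d : ℕ) + (m : ℕ) - N) + N * (2 * k - 1)
              = (2 * k - 1) * ((d : ℕ) + (m : ℕ) - N + N) by ring,
            show (d : ℕ) + (m : ℕ) - N + N = (d : ℕ) + (m : ℕ) by omega, Nat.mul_add]
        rw [hωN, hodd] at hcomb
        have hvv : ω ^ ((2 * k - 1) * ((d + m : Fin N) : ℕ))
            = -(ω ^ ((2 * k - 1) * (d : ℕ)) * ω ^ ((2 * k - 1) * (m : ℕ))) := by
          linear_combination -hcomb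
        rw [harg, Real.sin_pi_sub, hvv]
        push_cast
        field_simp
  have hfin : (∑ j ∈ Finset.range N, H j) = 2 * I * (s : ℂ) * ((k : ℂ) - ((N : ℂ) + 1) / 2) := by
    rw [Finset.range_eq_Ico, Finset.sum_eq_sum_Ico_succ_bot (by omega : 0 < N)]
    have h0 : H 0 = 0 := by simp [hH]
    rw [h0, zero_add]
    have hcg : ∀ j ∈ Finset.Ico 1 N, H j
        = -((Real.sin (Real.pi / N) : ℝ) : ℂ) *
            Complex.exp (Real.pi * I / N) ^ ((2 * k - 1) * j) /
          ((Real.sin (Real.pi * j / N) : ℝ) : ℂ) := by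
      intro j hj
      simp only [Finset.mem_Ico] at hj
      rw [hH]
      simp only [if_neg (show ¬ j = 0 by omega)]
      rfl
    rw [Finset.sum_congr rfl hcg, eig_sum N k hN hk1 hkN, hs]
  calc ∑ n : Fin N, A m n * ω ^ ((2 * k - 1) * (n : ℕ))
      = ∑ d : Fin N, A m (d + m) * ω ^ ((2 * k - 1) * ((d + m : Fin N) : ℕ)) :=
        (Equiv.sum_comp (Equiv.addRight m) (fun n : Fin N => A m n * ω ^ ((2 * k - 1) * (n : ℕ)))).symm
    _ = ∑ d : Fin N, H (d : ℕ) * ω ^ ((2 * k - 1) * (m : ℕ)) :=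
        Finset.sum_congr rfl (fun d _ => key d)
    _ = (∑ j ∈ Finset.range N, H j) * ω ^ ((2 * k - 1) * (m : ℕ)) := by
        rw [← Finset.sum_mul, Fin.sum_univ_eq_sum_range]
    _ = (2 * I * (s : ℂ) * ((k : ℂ) - ((N : ℂ) + 1) / 2)) * ω ^ ((2 * k - 1) * (m : ℕ)) := by
        rw [hfin]
    _ = _ := by
        simp only [Pi.smul_apply, smul_eq_mul]
theorem spectrum_quant_alternating_hilbert (N : ℕ) (hN : 2 ≤ N)
    (A : Matrix (Fin N) (Fin N) ℂ)
    (hA : ∀ m n : Fin N, A m n = if m = n then 0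
      else ((Real.sin (Real.pi / N) / Real.sin (Real.pi * ((m : ℝ) - (n : ℝ)) / N) : ℝ) : ℂ)) :
    spectrum ℂ A =
      {z : ℂ | ∃ k ∈ Finset.Icc 1 N,
        z = 2 * Complex.I * Real.sin (Real.pi / N) * ((k : ℂ) - ((N : ℂ) + 1) / 2)} := by
  have hNR : (0:ℝ) < N := by exact_mod_cast (by omega : 0 < N)
  set f : ℕ → ℂ := fun k => 2 * Complex.I * Real.sin (Real.pi / N) * ((k : ℂ) - ((N : ℂ) + 1) / 2)
    with hf
  have hsin_pos : 0 < Real.sin (Real.pi / N) := by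
    apply Real.sin_pos_of_pos_of_lt_pi
    · positivity
    · exact div_lt_self Real.pi_pos (by exact_mod_cast hN)
  -- each f k is in the spectrum
  have hmem : ∀ k ∈ Finset.Icc 1 N, f k ∈ spectrum ℂ A := by
    intro k hk
    simp only [Finset.mem_Icc] at hk
    have hv := mulVec_eig N k hN hk.1 hk.2 A hA
    set v : Fin N → ℂ := fun n : Fin N =>
      Complex.exp (Real.pi * I / N) ^ ((2 * k - 1) * (n : ℕ)) with hvdef
    have hv0 : v ≠ 0 := by
      intro h0
      have h1 := congrFun h0 ⟨0, by omega⟩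
      simp only [hvdef, Pi.zero_apply] at h1
      rw [Nat.mul_zero, pow_zero] at h1
      exact one_ne_zero h1
    rw [spectrum.mem_iff]
    intro hunit
    have hdet0 : (algebraMap ℂ (Matrix (Fin N) (Fin N) ℂ) (f k) - A).det = 0 := by
      rw [← Matrix.exists_mulVec_eq_zero_iff]
      refine ⟨v, hv0, ?_⟩
      rw [Matrix.sub_mulVec, hv, Algebra.algebraMap_eq_smul_one, Matrix.smul_mulVec,
        Matrix.one_mulVec, sub_self]
    have := ((Matrix.isUnit_iff_isUnit_det _).mp hunit).ne_zero
    exact this hdet0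
  -- spectrum is contained in the charpoly root finset
  have halg : ∀ z : ℂ, algebraMap ℂ (Matrix (Fin N) (Fin N) ℂ) z = Matrix.scalar (Fin N) z := by
    intro z
    ext i j
    simp [Matrix.algebraMap_matrix_apply, Matrix.scalar_apply, Matrix.diagonal]
  have heval : ∀ z : ℂ, A.charpoly.eval z = (algebraMap ℂ (Matrix (Fin N) (Fin N) ℂ) z - A).det := by
    intro z
    rw [Matrix.charpoly, eval_det, Matrix.matPolyEquiv_charmatrix, halg z]
    simp
  have hspec_sub : spectrum ℂ A ⊆ ↑(A.charpoly.roots.toFinset) := by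
    intro z hz
    rw [spectrum.mem_iff] at hz
    have hdet : (algebraMap ℂ (Matrix (Fin N) (Fin N) ℂ) z - A).det = 0 := by
      by_contra h
      exact hz ((Matrix.isUnit_iff_isUnit_det _).mpr (isUnit_iff_ne_zero.mpr h))
    simp only [Finset.coe_sort_coe, Multiset.mem_toFinset, Finset.mem_coe]
    rw [Polynomial.mem_roots (A.charpoly_monic.ne_zero), Polynomial.IsRoot, heval z]
    exact hdet
  have hcard_roots : A.charpoly.roots.toFinset.card ≤ N := by
    refine le_trans (Multiset.toFinset_card_le _) (le_trans (Polynomial.card_roots' _) ?_)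
    rw [Matrix.charpoly_natDegree_eq_dim]
    simp
  set S : Finset ℂ := (Finset.Icc 1 N).image f with hS
  have hfinj : ∀ a ∈ Finset.Icc 1 N, ∀ b ∈ Finset.Icc 1 N, f a = f b → a = b := by
    intro a _ b _ hab
    rw [hf] at hab
    simp only at hab
    have hc : (2 * Complex.I * (Real.sin (Real.pi / N) : ℂ)) ≠ 0 := by
      refine mul_ne_zero (mul_ne_zero two_ne_zero I_ne_zero) ?_
      exact Complex.ofReal_ne_zero.mpr (ne_of_gt hsin_pos)
    have h2 := mul_left_cancel₀ hc hab
    have : (a : ℂ) = (b : ℂ) := by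
      have := sub_left_inj.mp h2
      exact this
    exact_mod_cast this
  have hScard : S.card = N := by
    rw [hS, Finset.card_image_of_injOn hfinj, Nat.card_Icc]
    omega
  have hSsub : S ⊆ A.charpoly.roots.toFinset := by
    intro z hz
    obtain ⟨k, hk, rfl⟩ := Finset.mem_image.mp hz
    exact_mod_cast hspec_sub (hmem k hk)
  have hEq : S = A.charpoly.roots.toFinset :=
    Finset.eq_of_subset_of_card_le hSsub (by rw [hScard]; exact hcard_roots)
  apply Set.Subset.antisymm
  · intro z hz
    have h1 := hspec_sub hz
    rw [← hEq] at h1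
    obtain ⟨k, hk, rfl⟩ := Finset.mem_image.mp h1
    exact ⟨k, hk, rfl⟩
  · rintro z ⟨k, hk, rfl⟩
    exact hmem k hk
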